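/- Fix 0 < q < 1. On ℓ²(ℕ × ℕ) define a and b as in the representation σ. Then a* b = b a* as bounded operators. -/

import Mathlib

noncomputable section

/-- The Hilbert space ℓ²(ℕ × ℕ). -/
abbrev H2 : Type := lp (fun _ : ℕ × ℕ => ℂ) 2

/-- The standard orthonormal basis vector `|m,n⟩` of ℓ²(ℕ × ℕ). -/
def ket (m n : ℕ) : H2 := lp.single 2 (m, n) (1 : ℂ)

local notation "⟪" x ", " y "⟫" => @inner ℂ _ _ x y

lemma ket_inner (i j k l : ℕ) :
    ⟪ket i j, ket k l⟫ = if ((i, j) : ℕ × ℕ) = (k, l) then (1 : ℂ) else 0 := by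
  rw [ket, ket, lp.inner_single_left]
  rw [show ((lp.single 2 ((k, l) : ℕ × ℕ) (1 : ℂ) : lp (fun _ : ℕ × ℕ => ℂ) 2) (i, j))
      = if ((i, j) : ℕ × ℕ) = (k, l) then (1 : ℂ) else 0 from by
    rcases eq_or_ne ((i, j) : ℕ × ℕ) (k, l) with h | h
    · simp [h, lp.single_apply_self]
    · simp [h, lp.single_apply_ne _ _ _ h]]
  split_ifs <;> simp

lemma ket_coord (f : H2) (k : ℕ × ℕ) : (f : ∀ _ : ℕ × ℕ, ℂ) k = ⟪ket k.1 k.2, f⟫ := by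
  rw [ket, lp.inner_single_left]
  simp

open ContinuousLinearMap in
/-- In the representation σ: `a* b = b a*`. -/
theorem stmt16 (q : ℝ) (hq0 : 0 < q) (hq1 : q < 1)
    (a b : H2 →L[ℂ] H2)
    (ha0 : ∀ n : ℕ, a (ket 0 n) = 0)
    (ha : ∀ m n : ℕ, a (ket (m + 1) n)
        = ((Real.sqrt (1 - q ^ (2 * (m + 1))) * q ^ ((m + 1) + 2 * n) : ℝ) : ℂ) • ket m n)
    (hb : ∀ m n : ℕ, b (ket m n)
        = ((Real.sqrt (1 - q ^ (4 * n + 4)) * q ^ (2 * (m + n + 2)) : ℝ) : ℂ) • ket m (n + 1)) :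
    adjoint a * b = b * adjoint a := by
  -- action of the adjoint on basis vectors
  have hA : ∀ m n : ℕ, adjoint a (ket m n)
      = ((Real.sqrt (1 - q ^ (2 * (m + 1))) * q ^ ((m + 1) + 2 * n) : ℝ) : ℂ) • ket (m + 1) n := by
    intro m n
    apply lp.ext
    funext k
    have h1 := ket_coord (adjoint a (ket m n)) k
    have h2 := ket_coord ((((Real.sqrt (1 - q ^ (2 * (m + 1))) * q ^ ((m + 1) + 2 * n) : ℝ) : ℂ)
        • ket (m + 1) n)) k
    rw [h1, h2, adjoint_inner_right, inner_smul_right]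
    obtain ⟨m', n'⟩ := k
    dsimp only
    cases m' with
    | zero =>
        rw [ha0, inner_zero_left, ket_inner]
        have : ((0, n') : ℕ × ℕ) ≠ (m + 1, n) := by simp
        simp [this]
    | succ m'' =>
        rw [ha, inner_smul_left, ket_inner, ket_inner]
        rcases eq_or_ne ((m'', n') : ℕ × ℕ) ((m, n) : ℕ × ℕ) with h | h
        · obtain ⟨h1', h2'⟩ := Prod.mk.injEq .. ▸ h
          subst h1'; subst h2'
          simp
        · have h' : ((m'' + 1, n') : ℕ × ℕ) ≠ (m + 1, n) := by
            simpa [Prod.ext_iff] using (by simpa [Prod.ext_iff] using h)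
          simp [h, h']
  -- agreement on basis vectors
  have key : ∀ k : ℕ × ℕ, ∀ c : ℂ,
      (adjoint a * b) (lp.single 2 k c) = (b * adjoint a) (lp.single 2 k c) := by
    rintro ⟨m, n⟩ c
    have hs : (lp.single 2 ((m, n) : ℕ × ℕ) c : H2) = c • ket m n := by
      rw [ket, ← lp.single_smul]; norm_num
    rw [hs]
    simp only [mul_apply, map_smul]
    change c • adjoint a (b (ket m n)) = c • b (adjoint a (ket m n))
    rw [hb, map_smul, hA, hA, map_smul, hb]
    rw [smul_smul, smul_smul, smul_smul, smul_smul]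
    congr 1
    rw [mul_assoc, mul_assoc, ← Complex.ofReal_mul, ← Complex.ofReal_mul]
    congr 1
    exact_mod_cast (by ring :
      (Real.sqrt (1 - q ^ (4 * n + 4)) * q ^ (2 * (m + n + 2)))
        * (Real.sqrt (1 - q ^ (2 * (m + 1))) * q ^ ((m + 1) + 2 * (n + 1)))
      = (Real.sqrt (1 - q ^ (2 * (m + 1))) * q ^ ((m + 1) + 2 * n))
        * (Real.sqrt (1 - q ^ (4 * n + 4)) * q ^ (2 * ((m + 1) + n + 2))))
  -- extend by density
  apply ContinuousLinearMap.ext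
  intro f
  have H1 := ((lp.hasSum_single (p := 2) (by norm_num) f).mapL (adjoint a * b))
  have H2 := ((lp.hasSum_single (p := 2) (by norm_num) f).mapL (b * adjoint a))
  simp only [key] at H1
  exact H1.unique H2
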